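/- For any finite simple graph G, the induced matching number of G is at most the co-chordal cover number of G, which in turn is at most the matching number of G: ν(G) ≤ cochord(G) ≤ mat(G). -/

import Mathlib

open MvPolynomial

noncomputable section

namespace EdgeIdealReg

open scoped Classical

/-- The edge ideal of a simple graph, in the polynomial ring with variables the vertices. -/
def edgeIdeal (K : Type) [Field K] {V : Type} (G : SimpleGraph V) :
    Ideal (MvPolynomial V K) :=
  Ideal.span { p | ∃ u v : V, G.Adj u v ∧ p = X u * X v }

/-- The edge ideal of the induced subgraph on a set `s` of vertices, viewed inside the
polynomial ring of the ambient graph (extra variables do not change the regularity). -/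
def edgeIdealOn (K : Type) [Field K] {V : Type} (G : SimpleGraph V) (s : Set V) :
    Ideal (MvPolynomial V K) :=
  Ideal.span { p | ∃ u v : V, G.Adj u v ∧ u ∈ s ∧ v ∈ s ∧ p = X u * X v }

/-- The `r`-th symbolic power of an ideal: the intersection over all minimal primes `p` of `I`
of the contraction of `I^r` localized at `p`; concretely,
`f ∈ I^{(r)}` iff for every minimal prime `p` of `I` there is `s ∉ p` with `s * f ∈ I ^ r`. -/
def symbolicPower {R : Type} [CommRing R] (I : Ideal R) (r : ℕ) : Ideal R where
  carrier := { f | ∀ p ∈ I.minimalPrimes, ∃ s, s ∉ p ∧ s * f ∈ I ^ r }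
  zero_mem' := by
    intro p hp
    exact ⟨1, (Ideal.ne_top_iff_one p).mp hp.1.1.ne_top, by simp⟩
  add_mem' := by
    intro a b ha hb p hp
    obtain ⟨s, hs, hsa⟩ := ha p hp
    obtain ⟨t, ht, htb⟩ := hb p hp
    refine ⟨s * t, fun h => ?_, ?_⟩
    · rcases hp.1.1.mem_or_mem h with h' | h'
      · exact hs h'
      · exact ht h'
    · have : s * t * (a + b) = t * (s * a) + s * (t * b) := by ring
      rw [this]
      exact Ideal.add_mem _ (Ideal.mul_mem_left _ _ hsa) (Ideal.mul_mem_left _ _ htb)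
  smul_mem' := by
    intro c f hf p hp
    obtain ⟨s, hs, hsf⟩ := hf p hp
    refine ⟨s, hs, ?_⟩
    have : s * (c • f) = c * (s * f) := by
      simp only [smul_eq_mul]; ring
    rw [this]
    exact Ideal.mul_mem_left _ _ hsf

/-- Symbolic power with an integer exponent, with the convention `I^{(k)} = S` for `k ≤ 0`. -/
def symbolicPowerZ {R : Type} [CommRing R] (I : Ideal R) (k : ℤ) : Ideal R :=
  if k ≤ 0 then ⊤ else symbolicPower I k.toNat

/-- A graded free resolution of `S/I` over the polynomial ring `S = K[x_v]`:
`⋯ → F_{i+1} → F_i → ⋯ → F_0 = S → S/I → 0`, where `F_i` is a graded free module with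
basis elements of degrees `deg i k`, the differentials are given by matrices of homogeneous
polynomials of the appropriate degrees, the image of `F_1 → F_0 = S` is `I`, and the
complex is exact in positive homological degrees. -/
structure GradedFreeResolution {K : Type} [Field K] {σ : Type}
    (I : Ideal (MvPolynomial σ K)) where
  rank : ℕ → ℕ
  deg : (i : ℕ) → Fin (rank i) → ℕ
  rank_zero : rank 0 = 1
  deg_zero : ∀ k, deg 0 k = 0
  mat : (i : ℕ) → Matrix (Fin (rank i)) (Fin (rank (i + 1))) (MvPolynomial σ K)
  homog : ∀ i k j, mat i k j = 0 ∨
    ∃ e, deg (i + 1) j = deg i k + e ∧ (mat i k j).IsHomogeneous e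
  range_zero : ∀ f : MvPolynomial σ K,
    f ∈ I ↔ (fun _ => f) ∈ LinearMap.range (Matrix.mulVecLin (mat 0))
  isExact : ∀ i, LinearMap.ker (Matrix.mulVecLin (mat i)) =
    LinearMap.range (Matrix.mulVecLin (mat (i + 1)))

/-- The Castelnuovo–Mumford regularity of the quotient `S/I` for a homogeneous ideal `I` of
the polynomial ring: the least `d` such that some graded free resolution of `S/I` has all its
`i`-th syzygies generated in degrees `≤ d + i` (the minimal free resolution realizes the
infimum).  By convention `reg (S/S) = ⊥ = -∞`. -/

def regQuot {K : Type} [Field K] {σ : Type} (I : Ideal (MvPolynomial σ K)) : WithBot ℤ :=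
  if I = ⊤ then ⊥
  else ((sInf { d : ℤ | ∃ F : GradedFreeResolution I,
      ∀ i (k : Fin (F.rank i)), (F.deg i k : ℤ) ≤ d + i } : ℤ) : WithBot ℤ)

/-- A set of edges of `G` that forms a matching: pairwise disjoint edges. -/
def IsMatchingSet {V : Type} (G : SimpleGraph V) (M : Finset (Sym2 V)) : Prop :=
  (M : Set (Sym2 V)) ⊆ G.edgeSet ∧
    (M : Set (Sym2 V)).Pairwise fun e f => ∀ v, v ∈ e → v ∉ f

/-- An induced matching: a matching such that no two of its edges are joined by an edge
of `G`, i.e. it is the edge set of an induced subgraph. -/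
def IsInducedMatchingSet {V : Type} (G : SimpleGraph V) (M : Finset (Sym2 V)) : Prop :=
  IsMatchingSet G M ∧
    (M : Set (Sym2 V)).Pairwise fun e f => ∀ u v, u ∈ e → v ∈ f → ¬G.Adj u v

/-- The matching number `mat(G)`. -/
def matchingNumber {V : Type} (G : SimpleGraph V) : ℕ :=
  sSup { n | ∃ M, IsMatchingSet G M ∧ M.card = n }

/-- The induced matching number `ν(G)`. -/
def inducedMatchingNumber {V : Type} (G : SimpleGraph V) : ℕ :=
  sSup { n | ∃ M, IsInducedMatchingSet G M ∧ M.card = n }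

/-- `G` has an induced cycle of length `n`. -/
def HasInducedCycle {V : Type} (G : SimpleGraph V) (n : ℕ) : Prop :=
  ∃ f : ZMod n → V, Function.Injective f ∧
    ∀ i j : ZMod n, G.Adj (f i) (f j) ↔ (j = i + 1 ∨ i = j + 1)

/-- A graph is chordal if every induced cycle has length `3`. -/
def Chordal {V : Type} (G : SimpleGraph V) : Prop :=
  ∀ n, 4 ≤ n → ¬HasInducedCycle G n

/-- A graph is weakly chordal if every induced cycle in `G` and in `Gᶜ` has length at most 4. -/
def WeaklyChordal {V : Type} (G : SimpleGraph V) : Prop :=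
  (∀ n, 5 ≤ n → ¬HasInducedCycle G n) ∧ ∀ n, 5 ≤ n → ¬HasInducedCycle Gᶜ n

/-- The co-chordal cover number `cochord(G)`: the least `n` such that `n` co-chordal
subgraphs of `G` cover all the edges of `G`. -/
def cochordNumber {V : Type} (G : SimpleGraph V) : ℕ :=
  sInf { n | ∃ H : Fin n → SimpleGraph V,
    (∀ i, H i ≤ G ∧ Chordal (H i)ᶜ) ∧ ∀ e ∈ G.edgeSet, ∃ i, e ∈ (H i).edgeSet }

/-- A graph is unicyclic if it contains exactly one cycle. -/
def Unicyclic {V : Type} (G : SimpleGraph V) : Prop :=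
  ∃ (v : V) (c : G.Walk v v), c.IsCycle ∧
    ∀ (w : V) (c' : G.Walk w w), c'.IsCycle → { e | e ∈ c'.edges } = { e | e ∈ c.edges }

/-- Data exhibiting `G` as the graph `H_T` obtained from the induced subgraph on `Hset`
by attaching, at each vertex of `T ⊆ Hset`, a union of complete graphs having that vertex as
their only common vertex: a family of cliques `C i` of `G`, each meeting `Hset` exactly in
its attachment vertex `a i ∈ T`, two distinct cliques meeting in at most the common
attachment vertex, together covering all vertices outside `Hset`, and all edges of `G`
lying either inside `Hset` or inside one of the cliques. -/
structure CliqueAttachment {V : Type} (G : SimpleGraph V) (Hset T : Set V) where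
  ι : Type
  C : ι → Finset V
  a : ι → V
  a_mem_T : ∀ i, a i ∈ T
  T_sub : T ⊆ Hset
  inter_H : ∀ i, (C i : Set V) ∩ Hset = {a i}
  a_mem_C : ∀ i, a i ∈ C i
  clique : ∀ i, G.IsClique (C i)
  pairwise_inter : ∀ i j, i ≠ j → (C i : Set V) ∩ (C j : Set V) ⊆ ({a i} : Set V)
  cover : Hset ∪ (⋃ i, (C i : Set V)) = Set.univ
  edges_sub : ∀ u v, G.Adj u v → (u ∈ Hset ∧ v ∈ Hset) ∨ ∃ i, u ∈ C i ∧ v ∈ C i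

end EdgeIdealReg

section NuCochordMatAux

open EdgeIdealReg
open scoped Classical

variable {V : Type} [Fintype V] [DecidableEq V]

private lemma aux_inducedC4' (H : SimpleGraph V) {u v x y : V}
    (huv : H.Adj u v) (hxy : H.Adj x y)
    (hux : ¬H.Adj u x) (huy : ¬H.Adj u y) (hvx : ¬H.Adj v x) (hvy : ¬H.Adj v y)
    (dux : u ≠ x) (duy : u ≠ y) (dvx : v ≠ x) (dvy : v ≠ y) :
    HasInducedCycle Hᶜ 4 := by
  have duv := huv.ne
  have dxy := hxy.ne
  have hxu : ¬H.Adj x u := fun h => hux h.symm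
  have hyu : ¬H.Adj y u := fun h => huy h.symm
  have hxv : ¬H.Adj x v := fun h => hvx h.symm
  have hyv : ¬H.Adj y v := fun h => hvy h.symm
  have hall : ∀ k : ZMod 4, k = 0 ∨ k = 1 ∨ k = 2 ∨ k = 3 := by decide
  refine ⟨![u, x, v, y], ?_, ?_⟩
  · intro i j hij
    rcases hall i with hi | hi | hi | hi <;> rcases hall j with hj | hj | hj | hj <;>
      subst hi <;> subst hj <;> simp_all
  · intro i j
    rcases hall i with hi | hi | hi | hi <;> rcases hall j with hj | hj | hj | hj <;>
      subst hi <;> subst hj <;>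
      simp [SimpleGraph.compl_adj, duv, dxy, dux, duy, dvx, dvy, dux.symm, duy.symm,
        dvx.symm, dvy.symm, duv.symm, dxy.symm, huv, hxy, huv.symm, hxy.symm,
        hxu, hyu, hxv, hyv, hux, huy, hvx, hvy] <;> decide

/-- All `G`-edges touching the pair `{a,b}`. -/
private def star2 (G : SimpleGraph V) (a b : V) : SimpleGraph V where
  Adj u v := G.Adj u v ∧ (u = a ∨ u = b ∨ v = a ∨ v = b)
  symm := ⟨fun u v h => ⟨h.1.symm, by tauto⟩⟩
  loopless := ⟨fun u h => G.loopless.irrefl u h.1⟩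

private lemma star2_le (G : SimpleGraph V) (a b : V) : star2 G a b ≤ G := fun _ _ h => h.1

private lemma star2_compl_chordal (G : SimpleGraph V) (a b : V) (hab : G.Adj a b) :
    Chordal (star2 G a b)ᶜ := by
  rintro n hn ⟨f, hinj, hadj⟩
  haveI : NeZero n := ⟨by omega⟩
  set H := star2 G a b with hH
  have hdvd : ∀ m : ℕ, ((m : ℕ) : ZMod n) = 0 → n ∣ m := fun m hm =>
    (ZMod.natCast_eq_zero_iff m n).mp hm
  have key : ∀ i : ZMod n, H.Adj (f i) (f (i + 2)) := by
    intro i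
    have hne : f i ≠ f (i + 2) := by
      intro h
      have h2 : (((2 : ℕ) : ZMod n)) = 0 := by
        have := hinj h
        have h2' : (2 : ZMod n) = 0 := by linear_combination -this
        exact_mod_cast h2'
      have := Nat.le_of_dvd (by norm_num) (hdvd 2 h2)
      omega
    have hnadj : ¬ Hᶜ.Adj (f i) (f (i + 2)) := by
      rw [hadj]
      rintro (h | h)
      · have h1 : (((1 : ℕ) : ZMod n)) = 0 := by
          have h1' : (1 : ZMod n) = 0 := by linear_combination h
          exact_mod_cast h1'
        have := Nat.le_of_dvd (by norm_num) (hdvd 1 h1)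
        omega
      · have h3 : (((3 : ℕ) : ZMod n)) = 0 := by
          have h3' : (3 : ZMod n) = 0 := by linear_combination -h
          exact_mod_cast h3'
        have := Nat.le_of_dvd (by norm_num) (hdvd 3 h3)
        omega
    by_contra hA
    exact hnadj ((SimpleGraph.compl_adj H _ _).mpr ⟨hne, hA⟩)
  have hmem' : ∀ i : ZMod n, (f i = a ∨ f i = b) ∨ (f (i + 2) = a ∨ f (i + 2) = b) := by
    intro i
    rcases (key i).2 with h | h | h | h <;> tauto
  have hconsec : ∀ i : ZMod n, (f i = a ∨ f i = b) → (f (i + 1) = a ∨ f (i + 1) = b) → False := by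
    intro i h1 h2
    have hc := (SimpleGraph.compl_adj H _ _).mp ((hadj i (i + 1)).mpr (Or.inl rfl))
    rcases h1 with h1 | h1 <;> rcases h2 with h2 | h2 <;> rw [h1, h2] at hc
    · exact hc.1 rfl
    · exact hc.2 ⟨hab, Or.inl rfl⟩
    · exact hc.2 ⟨hab.symm, Or.inr (Or.inl rfl)⟩
    · exact hc.1 rfl
  set S : Finset (ZMod n) := Finset.univ.filter (fun i => f i = a ∨ f i = b) with hS
  have hScard : S.card ≤ 2 := by
    have h1 : S.card ≤ ({a, b} : Finset V).card := by
      apply Finset.card_le_card_of_injOn f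
      · intro i hi
        simp only [hS, Finset.mem_coe, Finset.mem_filter, Finset.mem_univ, true_and] at hi
        simp only [Finset.mem_coe, Finset.mem_insert, Finset.mem_singleton]
        tauto
      · exact fun i _ j _ h => hinj h
    calc S.card ≤ ({a, b} : Finset V).card := h1
      _ ≤ 2 := (Finset.card_insert_le _ _).trans (by simp)
  have hmemS : ∀ i : ZMod n, i ∈ S ∨ i + 2 ∈ S := by
    intro i
    rcases hmem' i with h | h
    · left; simp only [hS, Finset.mem_filter, Finset.mem_univ, true_and]; exact h
    · right; simp only [hS, Finset.mem_filter, Finset.mem_univ, true_and]; exact h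
  have hcompl : Sᶜ.card ≤ S.card := by
    apply Finset.card_le_card_of_injOn (· + 2)
    · intro i hi
      rcases hmemS i with h | h
      · exact absurd h (Finset.mem_compl.mp hi)
      · exact h
    · intro i _ j _ h
      exact add_right_cancel h
  have hcardZ : Fintype.card (ZMod n) = n := ZMod.card n
  have hcc : Sᶜ.card = n - S.card := by
    rw [Finset.card_compl, hcardZ]
  have hn4 : n = 4 := by omega
  subst hn4
  have h02 := hmem' 0
  have h13 := hmem' 1
  rw [show (0 : ZMod 4) + 2 = 2 by decide] at h02
  rw [show (1 : ZMod 4) + 2 = 3 by decide] at h13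
  rcases h02 with h02 | h02 <;> rcases h13 with h13 | h13
  · exact hconsec 0 h02 (by rw [show (0 : ZMod 4) + 1 = 1 by decide]; exact h13)
  · exact hconsec 3 h13 (by rw [show (3 : ZMod 4) + 1 = 0 by decide]; exact h02)
  · exact hconsec 1 h13 (by rw [show (1 : ZMod 4) + 1 = 2 by decide]; exact h02)
  · exact hconsec 2 h02 (by rw [show (2 : ZMod 4) + 1 = 3 by decide]; exact h13)

end NuCochordMatAux

open EdgeIdealReg in
/-- For any finite simple graph `G`, `ν(G) ≤ cochord(G) ≤ mat(G)`. -/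
theorem nu_le_cochord_le_mat {V : Type} [Fintype V] [DecidableEq V] (G : SimpleGraph V) :
    inducedMatchingNumber G ≤ cochordNumber G ∧ cochordNumber G ≤ matchingNumber G := by
  classical
  -- basic facts about the matching number
  have hrep : ∀ e : Sym2 V, ∃ p q : V, e = s(p, q) := fun e =>
    Sym2.ind (fun p q => ⟨p, q, rfl⟩) e
  obtain ⟨A, B, hAB⟩ : ∃ A B : Sym2 V → V, ∀ e, e = s(A e, B e) := by
    choose A B hAB using hrep
    exact ⟨A, B, hAB⟩
  have hbdd : BddAbove { n | ∃ M, IsMatchingSet G M ∧ M.card = n } := by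
    refine ⟨Fintype.card (Sym2 V), ?_⟩
    rintro k ⟨M, _, rfl⟩
    exact Finset.card_le_univ M
  have h0mem : (0 : ℕ) ∈ { n | ∃ M, IsMatchingSet G M ∧ M.card = n } :=
    ⟨∅, ⟨by simp, by simp⟩, by simp⟩
  have hmatmem : matchingNumber G ∈ { n | ∃ M, IsMatchingSet G M ∧ M.card = n } :=
    Nat.sSup_mem ⟨0, h0mem⟩ hbdd
  obtain ⟨M, hM, hMcard⟩ := hmatmem
  -- M is a maximal matching : every edge of G meets an edge of M
  have hmax : ∀ p q : V, G.Adj p q → ∃ m ∈ M, p ∈ m ∨ q ∈ m := by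
    intro p q hpq
    by_contra hcon
    push_neg at hcon
    have hnotmem : s(p, q) ∉ M := by
      intro hm
      have := hcon _ hm
      exact this.1 (Sym2.mem_mk_left p q)
    have hM' : IsMatchingSet G (insert s(p, q) M) := by
      constructor
      · intro e he
        simp only [Finset.coe_insert, Set.mem_insert_iff] at he
        rcases he with rfl | he
        · exact hpq
        · exact hM.1 he
      · rw [Finset.coe_insert]
        rw [Set.pairwise_insert]
        refine ⟨hM.2, ?_⟩
        intro m hm _
        have hdis := hcon m hm
        constructor
        · intro v hv hvm
          rw [Sym2.mem_iff] at hv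
          rcases hv with rfl | rfl
          · exact hdis.1 hvm
          · exact hdis.2 hvm
        · intro v hvm hv
          rw [Sym2.mem_iff] at hv
          rcases hv with rfl | rfl
          · exact hdis.1 hvm
          · exact hdis.2 hvm
    have hcard' : (insert s(p, q) M).card = matchingNumber G + 1 := by
      rw [Finset.card_insert_of_notMem hnotmem, hMcard]
    have : matchingNumber G + 1 ≤ matchingNumber G := by
      have hmem : matchingNumber G + 1 ∈ { n | ∃ M, IsMatchingSet G M ∧ M.card = n } :=
        ⟨insert s(p, q) M, hM', hcard'⟩
      exact le_csSup hbdd hmem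
    omega
  -- the edge-indexing of M
  have hgex : ∀ m ∈ M, ∃ i : Fin (matchingNumber G),
      (M.equivFin.symm (Fin.cast hMcard.symm i) : Sym2 V) = m := by
    intro m hm
    refine ⟨Fin.cast hMcard (M.equivFin ⟨m, hm⟩), ?_⟩
    rw [show Fin.cast hMcard.symm (Fin.cast hMcard (M.equivFin ⟨m, hm⟩)) =
      M.equivFin ⟨m, hm⟩ from Fin.ext rfl]
    rw [Equiv.symm_apply_apply]
  set g : Fin (matchingNumber G) → Sym2 V :=
    fun i => (M.equivFin.symm (Fin.cast hMcard.symm i) : Sym2 V) with hg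
  have hgM : ∀ i, g i ∈ M := fun i => (M.equivFin.symm (Fin.cast hMcard.symm i)).2
  have hgadj : ∀ i, G.Adj (A (g i)) (B (g i)) := by
    intro i
    have h1 : g i ∈ G.edgeSet := hM.1 (hgM i)
    rw [hAB (g i)] at h1
    exact h1
  -- the co-chordal cover of size matchingNumber G
  have hcov : matchingNumber G ∈ { n | ∃ H : Fin n → SimpleGraph V,
      (∀ i, H i ≤ G ∧ Chordal (H i)ᶜ) ∧ ∀ e ∈ G.edgeSet, ∃ i, e ∈ (H i).edgeSet } := by
    refine ⟨fun i => star2 G (A (g i)) (B (g i)), fun i =>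
      ⟨star2_le G _ _, star2_compl_chordal G _ _ (hgadj i)⟩, ?_⟩
    intro e he
    obtain ⟨p, q, rfl⟩ := hrep e
    rw [SimpleGraph.mem_edgeSet] at he
    obtain ⟨m, hm, hpm⟩ := hmax p q he
    obtain ⟨i, hi⟩ := hgex m hm
    refine ⟨i, ?_⟩
    rw [SimpleGraph.mem_edgeSet]
    have hm' : m = s(A m, B m) := hAB m
    refine ⟨he, ?_⟩
    have : g i = m := hi
    rw [this]
    rcases hpm with hp | hq
    · rw [hm', Sym2.mem_iff] at hp
      tauto
    · rw [hm', Sym2.mem_iff] at hq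
      tauto
  have hpart2 : cochordNumber G ≤ matchingNumber G := Nat.sInf_le hcov
  refine ⟨?_, hpart2⟩
  -- part 1 : ν(G) ≤ cochord(G)
  obtain ⟨H, hHprop, hHcover⟩ :
      ∃ H : Fin (cochordNumber G) → SimpleGraph V,
        (∀ i, H i ≤ G ∧ Chordal (H i)ᶜ) ∧ ∀ e ∈ G.edgeSet, ∃ i, e ∈ (H i).edgeSet :=
    Nat.sInf_mem ⟨matchingNumber G, hcov⟩
  show sSup { n | ∃ M, IsInducedMatchingSet G M ∧ M.card = n } ≤ cochordNumber G
  have hne0 : (0 : ℕ) ∈ { n | ∃ M, IsInducedMatchingSet G M ∧ M.card = n } :=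
    ⟨∅, ⟨⟨by simp, by simp⟩, by simp⟩, by simp⟩
  apply csSup_le ⟨0, hne0⟩
  rintro k ⟨N, hN, rfl⟩
  -- map each edge of N to a covering co-chordal subgraph, injectively
  have hchoose : ∀ e : {e : Sym2 V // e ∈ N}, ∃ i, (e : Sym2 V) ∈ (H i).edgeSet :=
    fun e => hHcover e (hN.1.1 e.2)
  choose ψ hψ using hchoose
  have hψinj : Function.Injective ψ := by
    intro e f hef
    by_contra hne
    have hneS : (e : Sym2 V) ≠ (f : Sym2 V) := fun h => hne (Subtype.ext h)
    have he' : (e : Sym2 V) ∈ (H (ψ e)).edgeSet := hψ e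
    have hf' : (f : Sym2 V) ∈ (H (ψ e)).edgeSet := by rw [hef]; exact hψ f
    -- endpoints
    have heq : (e : Sym2 V) = s(A e, B e) := hAB e
    have hfq : (f : Sym2 V) = s(A f, B f) := hAB f
    have huv : (H (ψ e)).Adj (A e) (B e) := by rw [heq, SimpleGraph.mem_edgeSet] at he'; exact he'
    have hxy : (H (ψ e)).Adj (A f) (B f) := by rw [hfq, SimpleGraph.mem_edgeSet] at hf'; exact hf'
    -- disjointness from the matching property
    have hpair := hN.1.2 (Finset.mem_coe.mpr e.2) (Finset.mem_coe.mpr f.2) hneS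
    have hAe : A (e : Sym2 V) ∈ (e : Sym2 V) := by
      have h := Sym2.mem_mk_left (A (e : Sym2 V)) (B (e : Sym2 V))
      rwa [← heq] at h
    have hBe : B (e : Sym2 V) ∈ (e : Sym2 V) := by
      have h := Sym2.mem_mk_right (A (e : Sym2 V)) (B (e : Sym2 V))
      rwa [← heq] at h
    have hAf : A (f : Sym2 V) ∈ (f : Sym2 V) := by
      have h := Sym2.mem_mk_left (A (f : Sym2 V)) (B (f : Sym2 V))
      rwa [← hfq] at h
    have hBf : B (f : Sym2 V) ∈ (f : Sym2 V) := by
      have h := Sym2.mem_mk_right (A (f : Sym2 V)) (B (f : Sym2 V))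
      rwa [← hfq] at h
    have dux : A (e : Sym2 V) ≠ A (f : Sym2 V) := fun h => hpair _ hAe (h ▸ hAf)
    have duy : A (e : Sym2 V) ≠ B (f : Sym2 V) := fun h => hpair _ hAe (h ▸ hBf)
    have dvx : B (e : Sym2 V) ≠ A (f : Sym2 V) := fun h => hpair _ hBe (h ▸ hAf)
    have dvy : B (e : Sym2 V) ≠ B (f : Sym2 V) := fun h => hpair _ hBe (h ▸ hBf)
    -- non-adjacency from the induced matching property
    have hind := hN.2 (Finset.mem_coe.mpr e.2) (Finset.mem_coe.mpr f.2) hneS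
    have hle : H (ψ e) ≤ G := (hHprop (ψ e)).1
    have hux : ¬(H (ψ e)).Adj (A (e : Sym2 V)) (A (f : Sym2 V)) :=
      fun h => hind _ _ hAe hAf (hle h)
    have huy : ¬(H (ψ e)).Adj (A (e : Sym2 V)) (B (f : Sym2 V)) :=
      fun h => hind _ _ hAe hBf (hle h)
    have hvx : ¬(H (ψ e)).Adj (B (e : Sym2 V)) (A (f : Sym2 V)) :=
      fun h => hind _ _ hBe hAf (hle h)
    have hvy : ¬(H (ψ e)).Adj (B (e : Sym2 V)) (B (f : Sym2 V)) :=
      fun h => hind _ _ hBe hBf (hle h)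
    exact (hHprop (ψ e)).2 4 le_rfl
      (aux_inducedC4' (H (ψ e)) huv hxy hux huy hvx hvy dux duy dvx dvy)
  calc N.card = Fintype.card {e : Sym2 V // e ∈ N} := (Fintype.card_coe N).symm
    _ ≤ Fintype.card (Fin (cochordNumber G)) := Fintype.card_le_of_injective ψ hψinj
    _ = cochordNumber G := Fintype.card_fin _
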